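/- Let Λ be a 2-dimensional sublattice of the 2×2 integer matrices, i.e. a ℤ-submodule spanned by two ℤ-linearly independent matrices. Suppose Λ is non-null (it contains a matrix of nonzero determinant) and is stable under one of the pairings S₁(X,Y) = X·Y, S₂(X,Y) = adj(X)·Y, S₃(X,Y) = X·adj(Y). Then there exist an integer matrix A and an integer r such that r divides det(A) and Λ is the ℤ-span of A and r·E, where E is the identity matrix. -/

import Mathlib

open Matrix

private lemma adj_eq_tr (X : Matrix (Fin 2) (Fin 2) ℤ) :
    X.adjugate = X.trace • (1 : Matrix (Fin 2) (Fin 2) ℤ) - X := by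
  ext i j
  fin_cases i <;> fin_cases j <;>
    simp [Matrix.adjugate_fin_two, Matrix.trace_fin_two, Matrix.sub_apply,
      Matrix.smul_apply, Matrix.one_apply, smul_eq_mul,
      ← Matrix.diagonal_intCast, Matrix.diagonal_apply] <;> ring_nf

private lemma cayley2 (X : Matrix (Fin 2) (Fin 2) ℤ) :
    X.det • (1 : Matrix (Fin 2) (Fin 2) ℤ) = X.trace • X - X * X := by
  have h := X.mul_adjugate
  rw [adj_eq_tr, Matrix.mul_sub, Matrix.mul_smul, Matrix.mul_one] at h
  exact h.symm

/-- Any non-null 2-dimensional sublattice of `Mat₂(ℤ)` stable under one of the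
pairings `S₁(X,Y) = XY`, `S₂(X,Y) = adj(X)·Y`, `S₃(X,Y) = X·adj(Y)` is the
ℤ-span of a matrix `A` and a scalar matrix `r·E` with `r ∣ det A`. -/
theorem stmt16 (Λ : Submodule ℤ (Matrix (Fin 2) (Fin 2) ℤ))
    (hlat : ∃ B C : Matrix (Fin 2) (Fin 2) ℤ,
      LinearIndependent ℤ ![B, C] ∧ Λ = Submodule.span ℤ {B, C})
    (hnonnull : ∃ X ∈ Λ, X.det ≠ 0)
    (hstab : (∀ X ∈ Λ, ∀ Y ∈ Λ, X * Y ∈ Λ) ∨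
             (∀ X ∈ Λ, ∀ Y ∈ Λ, X.adjugate * Y ∈ Λ) ∨
             (∀ X ∈ Λ, ∀ Y ∈ Λ, X * Y.adjugate ∈ Λ)) :
    ∃ (A : Matrix (Fin 2) (Fin 2) ℤ) (r : ℤ), r ∣ A.det ∧
      Λ = Submodule.span ℤ {A, r • (1 : Matrix (Fin 2) (Fin 2) ℤ)} := by
  obtain ⟨B, C, hBC, hΛ⟩ := hlat
  -- Step 1: Λ is closed under multiplication in all three cases
  have hmul : ∀ X ∈ Λ, ∀ Y ∈ Λ, X * Y ∈ Λ := by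
    rcases hstab with h | h | h
    · exact h
    · intro X hX Y hY
      have e : X * Y = X.trace • Y - X.adjugate * Y := by
        rw [adj_eq_tr, Matrix.sub_mul, Matrix.smul_mul, Matrix.one_mul]; abel
      rw [e]
      exact Submodule.sub_mem _ (Submodule.smul_mem _ _ hY) (h X hX Y hY)
    · intro X hX Y hY
      have e : X * Y = Y.trace • X - X * Y.adjugate := by
        rw [adj_eq_tr, Matrix.mul_sub, Matrix.mul_smul, Matrix.mul_one]; abel
      rw [e]
      exact Submodule.sub_mem _ (Submodule.smul_mem _ _ hX) (h X hX Y hY)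
  -- Step 2: Λ contains det X • 1 for each X ∈ Λ  (Cayley–Hamilton)
  have hdet1 : ∀ X ∈ Λ, X.det • (1 : Matrix (Fin 2) (Fin 2) ℤ) ∈ Λ := by
    intro X hX
    rw [cayley2]
    exact Submodule.sub_mem _ (Submodule.smul_mem _ _ hX) (hmul X hX X hX)
  obtain ⟨X₀, hX₀, hd0⟩ := hnonnull
  set d : ℤ := X₀.det with hd
  have hd1 : d • (1 : Matrix (Fin 2) (Fin 2) ℤ) ∈ Λ := hdet1 X₀ hX₀
  rw [hΛ] at hd1
  obtain ⟨p, q, hpq⟩ := Submodule.mem_span_pair.mp hd1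
  have hpq0 : ¬(p = 0 ∧ q = 0) := by
    rintro ⟨rfl, rfl⟩
    simp only [zero_smul, add_zero, zero_add] at hpq
    have : d = 0 ∨ (1 : Matrix (Fin 2) (Fin 2) ℤ) = 0 := smul_eq_zero.mp hpq.symm
    rcases this with h | h
    · exact hd0 h
    · exact one_ne_zero h
  set g : ℤ := (Int.gcd p q : ℤ) with hgdef
  have hgpos : 0 < Int.gcd p q := by
    rcases Nat.eq_zero_or_pos (Int.gcd p q) with h | h
    · exact absurd (Int.gcd_eq_zero_iff.mp h) hpq0
    · exact h
  have hg : g ≠ 0 := by rw [hgdef]; exact_mod_cast hgpos.ne'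
  have hgp : g ∣ p := Int.gcd_dvd_left p q
  have hgq : g ∣ q := Int.gcd_dvd_right p q
  have hgd : g ∣ d := by
    have h00 := congrFun (congrFun hpq 0) 0
    simp only [Matrix.add_apply, Matrix.smul_apply, Matrix.one_apply_eq, smul_eq_mul,
      mul_one] at h00
    rw [← h00]
    exact dvd_add (Dvd.dvd.mul_right hgp _) (Dvd.dvd.mul_right hgq _)
  set a : ℤ := p / g with ha
  set b : ℤ := q / g with hb
  set s : ℤ := d / g with hs
  -- the reduced relation a • B + b • C = s • 1
  have habs : a • B + b • C = s • (1 : Matrix (Fin 2) (Fin 2) ℤ) := by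
    apply smul_right_injective (Matrix (Fin 2) (Fin 2) ℤ) hg
    simp only [smul_add, smul_smul]
    rw [Int.mul_ediv_cancel' hgp, Int.mul_ediv_cancel' hgq, Int.mul_ediv_cancel' hgd]
    exact hpq
  have hcop : Int.gcd a b = 1 := Int.gcd_div_gcd_div_gcd hgpos
  set u : ℤ := Int.gcdA a b with hu
  set v : ℤ := Int.gcdB a b with hv
  have huv : a * u + b * v = 1 := by
    have h := Int.gcd_eq_gcd_ab a b
    rw [hcop] at h
    exact_mod_cast h.symm
  set A : Matrix (Fin 2) (Fin 2) ℤ := v • B - u • C with hA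
  have hBeq : b • A + u • (s • (1 : Matrix (Fin 2) (Fin 2) ℤ)) = B := by
    rw [← habs, hA]
    match_scalars
    · linear_combination huv
    · ring
  have hCeq : (-a) • A + v • (s • (1 : Matrix (Fin 2) (Fin 2) ℤ)) = C := by
    rw [← habs, hA]
    match_scalars
    · ring
    · linear_combination huv
  -- Λ = span {A, s • 1}
  have hspan : Λ = Submodule.span ℤ {A, s • (1 : Matrix (Fin 2) (Fin 2) ℤ)} := by
    rw [hΛ]
    apply le_antisymm
    · rw [Submodule.span_le]
      rintro X (rfl | rfl)
      · exact Submodule.mem_span_pair.mpr ⟨b, u, hBeq⟩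
      · exact Submodule.mem_span_pair.mpr ⟨-a, v, hCeq⟩
    · rw [Submodule.span_le]
      rintro X (rfl | rfl)
      · rw [hA]
        exact Submodule.sub_mem _
          (Submodule.smul_mem _ _ (Submodule.subset_span (by left; rfl)))
          (Submodule.smul_mem _ _ (Submodule.subset_span (by right; rfl)))
      · rw [← habs]
        exact Submodule.add_mem _
          (Submodule.smul_mem _ _ (Submodule.subset_span (by left; rfl)))
          (Submodule.smul_mem _ _ (Submodule.subset_span (by right; rfl)))
  -- A is not a scalar matrix
  have hAns : ¬(A 0 1 = 0 ∧ A 1 0 = 0 ∧ A 0 0 = A 1 1) := by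
    rintro ⟨h01, h10, hdiag⟩
    obtain ⟨t, hAscalar⟩ : ∃ t : ℤ, A = t • (1 : Matrix (Fin 2) (Fin 2) ℤ) := by
      refine ⟨A 0 0, ?_⟩
      ext i j
      fin_cases i <;> fin_cases j <;>
        simp [Matrix.smul_apply, Matrix.one_apply, smul_eq_mul,
          ← Matrix.diagonal_intCast, Matrix.diagonal_apply, h01, h10] <;> omega
    have hBscalar : B = (b * t + u * s) • (1 : Matrix (Fin 2) (Fin 2) ℤ) := by
      rw [← hBeq, hAscalar, smul_smul, smul_smul, ← add_smul]
    have hCscalar : C = (-a * t + v * s) • (1 : Matrix (Fin 2) (Fin 2) ℤ) := by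
      rw [← hCeq, hAscalar, smul_smul, smul_smul, ← add_smul]
    set β : ℤ := b * t + u * s
    set γ : ℤ := -a * t + v * s
    have hrel : γ • B + (-β) • C = 0 := by
      rw [hBscalar, hCscalar, smul_smul, smul_smul, ← add_smul]
      ring_nf
      simp
    have h := (LinearIndependent.pair_iff.mp hBC) γ (-β) hrel
    have hβ : β = 0 := by omega
    have hB0 : B = 0 := by rw [hBscalar, hβ, zero_smul]
    have h2 := (LinearIndependent.pair_iff.mp hBC) 1 0 (by rw [hB0]; simp)
    exact one_ne_zero h2.1
  -- r := s divides det A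
  have hAmem : A ∈ Λ := by
    rw [hΛ, hA]
    exact Submodule.sub_mem _
      (Submodule.smul_mem _ _ (Submodule.subset_span (by left; rfl)))
      (Submodule.smul_mem _ _ (Submodule.subset_span (by right; rfl)))
  have hdetA : A.det • (1 : Matrix (Fin 2) (Fin 2) ℤ) ∈ Λ := hdet1 A hAmem
  rw [hspan] at hdetA
  obtain ⟨m, n, hmn⟩ := Submodule.mem_span_pair.mp hdetA
  have h01 := congrFun (congrFun hmn 0) 1
  have h10 := congrFun (congrFun hmn 1) 0
  have h00 := congrFun (congrFun hmn 0) 0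
  have h11 := congrFun (congrFun hmn 1) 1
  simp only [Matrix.add_apply, Matrix.smul_apply, Matrix.one_apply, smul_eq_mul] at h01 h10 h00 h11
  norm_num at h01 h10 h00 h11
  have hm : m = 0 := by
    by_contra hm
    refine hAns ⟨h01.resolve_left hm, h10.resolve_left hm, ?_⟩
    have hmm : m * A 0 0 = m * A 1 1 := by linarith
    exact mul_left_cancel₀ hm hmm
  refine ⟨A, s, ⟨n, ?_⟩, hspan⟩
  rw [hm] at h00
  linarith
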